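/- Let D be a non-trivial (v,b,r,k,λ)-BIBD with v ≤ b, and let A be the adjacency matrix over ℝ of the flag-graph Γ₁(D). Then the characteristic polynomial of A equals (X − (r+k−2)) · (X − (k−2))^{b−v} · (X + 2)^{bk−b−v+1} · (X² − (r+k−4)·X + ((r−2)(k−2) − (r−λ)))^{v−1}. -/

import Mathlib

/-- A `(v,b,r,k,lam)`-balanced incomplete block design: a finite set of `v` points and a
family of `b` distinct blocks, each block a `k`-element subset of the points with
`1 < k < v`, such that every point lies in exactly `r` blocks and every pair of distinct
points is contained in exactly `lam` blocks (all parameters positive). -/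
structure BIBD (v b r k lam : ℕ) where
  P : Type
  [fintypeP : Fintype P]
  [decEqP : DecidableEq P]
  blocks : Finset (Finset P)
  card_points : Fintype.card P = v
  card_blocks : blocks.card = b
  block_size : ∀ c ∈ blocks, c.card = k
  one_lt_k : 1 < k
  k_lt_v : k < v
  lam_pos : 0 < lam
  point_deg : ∀ p : P, (blocks.filter (fun c => p ∈ c)).card = r
  pair_deg : ∀ p q : P, p ≠ q → (blocks.filter (fun c => p ∈ c ∧ q ∈ c)).card = lam

attribute [instance] BIBD.fintypeP BIBD.decEqP

variable {v b r k lam : ℕ}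

/-- A flag of a BIBD: an incident point-block pair `(p, c)` with `p ∈ c`. -/
def BIBD.Flag (D : BIBD v b r k lam) : Type :=
  {pc : D.P × Finset D.P // pc.2 ∈ D.blocks ∧ pc.1 ∈ pc.2}

instance (D : BIBD v b r k lam) : Fintype D.Flag :=
  inferInstanceAs (Fintype {pc : D.P × Finset D.P // pc.2 ∈ D.blocks ∧ pc.1 ∈ pc.2})

instance (D : BIBD v b r k lam) : DecidableEq D.Flag :=
  inferInstanceAs (DecidableEq {pc : D.P × Finset D.P // pc.2 ∈ D.blocks ∧ pc.1 ∈ pc.2})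

/-- The flag-graph `Γ₁(D)`: vertices are the flags of `D`; two distinct flags `(p,c)` and
`(q,d)` are adjacent iff `p = q` or `c = d`. -/
def BIBD.Gamma1 (D : BIBD v b r k lam) : SimpleGraph D.Flag where
  Adj x y := x ≠ y ∧ (x.1.1 = y.1.1 ∨ x.1.2 = y.1.2)
  symm := ⟨fun _ _ h => ⟨h.1.symm, h.2.imp Eq.symm Eq.symm⟩⟩
  loopless := ⟨fun _ h => h.1 rfl⟩

instance (D : BIBD v b r k lam) : DecidableRel D.Gamma1.Adj :=
  fun x y => inferInstanceAs (Decidable (x ≠ y ∧ (x.1.1 = y.1.1 ∨ x.1.2 = y.1.2)))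

section AuxFlag

set_option synthInstance.maxHeartbeats 1000000
set_option maxHeartbeats 3000000

open Matrix Polynomial

variable (D : BIBD v b r k lam)

private abbrev Blx : Type := {c : Finset D.P // c ∈ D.blocks}

private abbrev Sfx : Type := {x : D.P × Blx D // x.1 ∈ x.2.1}

private def flagEquiv : D.Flag ≃ Sfx D where
  toFun f := ⟨(f.1.1, ⟨f.1.2, f.2.1⟩), f.2.2⟩
  invFun x := ⟨(x.1.1, x.1.2.1), x.1.2.2, x.2⟩
  left_inv f := rfl
  right_inv x := rfl

private def Nmat : Matrix D.P (Blx D) ℝ := Matrix.of fun p c => if p ∈ c.1 then 1 else 0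

private def Bmat : Matrix (D.P ⊕ Blx D) (Sfx D) ℝ := Matrix.of fun i x =>
  Sum.elim (fun p => if x.1.1 = p then (1:ℝ) else 0) (fun c => if x.1.2 = c then (1:ℝ) else 0) i

example : Fintype.card (Blx D) = b := by rw [Fintype.card_coe, D.card_blocks]


private lemma sum_Bl_real (f : Finset D.P → ℝ) :
    (∑ c : Blx D, f c.1) = ∑ c ∈ D.blocks, f c := by
  rw [Finset.univ_eq_attach, Finset.sum_attach]

private lemma sum_Bl_ite (p : D.P) : (∑ c : Blx D, if p ∈ c.1 then (1:ℝ) else 0) = r := by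
  rw [sum_Bl_real D (fun c => if p ∈ c then (1:ℝ) else 0), Finset.sum_boole]
  exact_mod_cast D.point_deg p

private lemma sum_P_ite (c : Blx D) : (∑ p : D.P, if p ∈ c.1 then (1:ℝ) else 0) = k := by
  rw [Finset.sum_boole]
  have : Finset.univ.filter (fun p => p ∈ c.1) = c.1 := by ext p; simp
  rw [this, D.block_size c.1 c.2]

private lemma sum_Bl_pair (p q : D.P) (h : p ≠ q) :
    (∑ c : Blx D, (if p ∈ c.1 then (1:ℝ) else 0) * (if q ∈ c.1 then 1 else 0)) = lam := by
  rw [sum_Bl_real D (fun c => (if p ∈ c then (1:ℝ) else 0) * (if q ∈ c then 1 else 0))]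
  have : ∀ c : Finset D.P, (if p ∈ c then (1:ℝ) else 0) * (if q ∈ c then 1 else 0)
      = if p ∈ c ∧ q ∈ c then 1 else 0 := by
    intro c; by_cases h1 : p ∈ c <;> by_cases h2 : q ∈ c <;> simp [h1, h2]
  simp_rw [this]
  rw [Finset.sum_boole]
  exact_mod_cast D.pair_deg p q h

private lemma sumS (g : D.P × Blx D → ℝ) :
    ∑ x : Sfx D, g x.1 = ∑ y : D.P × Blx D, if y.1 ∈ y.2.1 then g y else 0 := by
  rw [← Finset.sum_filter]
  exact (Finset.sum_subtype _ (fun x => by simp only [Finset.mem_filter, Finset.mem_univ, true_and]) g).symm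


private lemma cardS_vr : (Fintype.card (Sfx D) : ℝ) = v * r := by
  have h0 : (Fintype.card (Sfx D) : ℝ) = ∑ _x : Sfx D, (1:ℝ) := by
    simp [Finset.card_univ]
  rw [h0, sumS D (fun _ => (1:ℝ)), Fintype.sum_prod_type]
  have : ∀ p : D.P, (∑ c : Blx D, if (p, c).1 ∈ (p, c).2.1 then (1:ℝ) else 0) = r := by
    intro p; exact sum_Bl_ite D p
  rw [Finset.sum_congr rfl (fun p _ => this p), Finset.sum_const, Finset.card_univ,
    D.card_points, nsmul_eq_mul]

private lemma cardS_bk : (Fintype.card (Sfx D) : ℝ) = b * k := by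
  have h0 : (Fintype.card (Sfx D) : ℝ) = ∑ _x : Sfx D, (1:ℝ) := by
    simp [Finset.card_univ]
  rw [h0, sumS D (fun _ => (1:ℝ)), Fintype.sum_prod_type_right]
  have : ∀ c : Blx D, (∑ p : D.P, if (p, c).1 ∈ (p, c).2.1 then (1:ℝ) else 0) = k := by
    intro c; exact sum_P_ite D c
  rw [Finset.sum_congr rfl (fun c _ => this c), Finset.sum_const, Finset.card_univ,
    Fintype.card_coe, D.card_blocks, nsmul_eq_mul]

private lemma card_Sf : Fintype.card (Sfx D) = b * k := by
  have := cardS_bk D; exact_mod_cast this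

private lemma vr_eq_bk (D : BIBD v b r k lam) : v * r = b * k := by
  have h := (cardS_vr D).symm.trans (cardS_bk D); exact_mod_cast h

private lemma identR (D : BIBD v b r k lam) : (lam : ℝ) * ((v:ℝ) - 1) = (r:ℝ) * ((k:ℝ) - 1) := by
  have hv : 0 < v := lt_trans (lt_trans Nat.zero_lt_one D.one_lt_k) D.k_lt_v
  have hP : Nonempty D.P := by
    rw [← Fintype.card_pos_iff, D.card_points]; exact hv
  obtain ⟨p⟩ := hP
  have hcard : (Finset.univ.erase p).card = v - 1 := by
    rw [Finset.card_erase_of_mem (Finset.mem_univ p), Finset.card_univ, D.card_points]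
  calc (lam : ℝ) * ((v:ℝ) - 1)
      = ∑ q ∈ Finset.univ.erase p, ∑ c : Blx D,
          (if p ∈ c.1 then (1:ℝ) else 0) * (if q ∈ c.1 then 1 else 0) := by
        rw [Finset.sum_congr rfl (fun q hq =>
          sum_Bl_pair D p q (fun h => (Finset.ne_of_mem_erase hq) h.symm))]
        rw [Finset.sum_const, hcard, nsmul_eq_mul, Nat.cast_sub hv]
        push_cast; ring
    _ = ∑ c : Blx D, ∑ q ∈ Finset.univ.erase p,
          (if p ∈ c.1 then (1:ℝ) else 0) * (if q ∈ c.1 then 1 else 0) := Finset.sum_comm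
    _ = ∑ c : Blx D, (if p ∈ c.1 then (1:ℝ) else 0) * ((k:ℝ) - 1) := by
        refine Finset.sum_congr rfl (fun c _ => ?_)
        rw [← Finset.mul_sum]
        by_cases hp : p ∈ c.1
        · have hfil : (Finset.univ.erase p).filter (fun q => q ∈ c.1) = c.1.erase p := by
            ext q; simp [Finset.mem_erase, and_comm]
          have hsum : (∑ q ∈ Finset.univ.erase p, if q ∈ c.1 then (1:ℝ) else 0)
              = ((c.1.erase p).card : ℝ) := by
            rw [Finset.sum_boole, hfil]
          rw [hsum, Finset.card_erase_of_mem hp, D.block_size c.1 c.2,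
            Nat.cast_sub (le_of_lt D.one_lt_k)]
          push_cast; ring
        · simp [hp]
    _ = (r:ℝ) * ((k:ℝ) - 1) := by rw [← Finset.sum_mul, sum_Bl_ite]


private lemma sum_dd {α : Type} [Fintype α] [DecidableEq α] (a : α) (f : α → ℝ) :
    (∑ p : α, (if p = a then (1:ℝ) else 0) * f p) = f a := by
  rw [Finset.sum_eq_single a]
  · simp
  · intro p _ hp; simp [hp]
  · intro h; exact absurd (Finset.mem_univ a) h

private lemma sum_fd {α : Type} [Fintype α] [DecidableEq α] (a : α) (f : α → ℝ) :
    (∑ p : α, f p * (if p = a then 1 else 0)) = f a := by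
  rw [Finset.sum_eq_single a]
  · simp
  · intro p _ hp; simp [hp]
  · intro h; exact absurd (Finset.mem_univ a) h

private lemma BtB : (Bmat D)ᵀ * Bmat D =
    (D.Gamma1.adjMatrix ℝ).submatrix (flagEquiv D).symm (flagEquiv D).symm + (2:ℝ) • 1 := by
  ext x y
  rw [Matrix.add_apply, Matrix.mul_apply, Fintype.sum_sum_type]
  simp only [Bmat, transpose_apply, of_apply, Sum.elim_inl, Sum.elim_inr]
  have h1 : (∑ p : D.P, (if x.1.1 = p then (1:ℝ) else 0) * (if y.1.1 = p then 1 else 0))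
      = if x.1.1 = y.1.1 then 1 else 0 := by
    have e1 : ∀ p : D.P, (if x.1.1 = p then (1:ℝ) else 0) * (if y.1.1 = p then 1 else 0)
        = (if p = x.1.1 then (1:ℝ) else 0) * (if y.1.1 = p then 1 else 0) := by
      intro p; by_cases h : x.1.1 = p
      · subst h; simp
      · rw [if_neg h, if_neg (show ¬ p = x.1.1 from fun hh => h hh.symm)]
    rw [Finset.sum_congr rfl (fun p _ => e1 p), sum_dd]
    by_cases h : x.1.1 = y.1.1
    · simp [h]
    · rw [if_neg (show ¬ (y : D.P × Blx D).1 = x.1.1 from fun hh => h hh.symm), if_neg h]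
  have h2 : (∑ c : Blx D, (if x.1.2 = c then (1:ℝ) else 0) * (if y.1.2 = c then 1 else 0))
      = if x.1.2 = y.1.2 then 1 else 0 := by
    have e1 : ∀ c : Blx D, (if x.1.2 = c then (1:ℝ) else 0) * (if y.1.2 = c then 1 else 0)
        = (if c = x.1.2 then (1:ℝ) else 0) * (if y.1.2 = c then 1 else 0) := by
      intro c; by_cases h : x.1.2 = c
      · subst h; simp
      · rw [if_neg h, if_neg (show ¬ c = x.1.2 from fun hh => h hh.symm)]
    rw [Finset.sum_congr rfl (fun c _ => e1 c), sum_dd]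
    by_cases h : x.1.2 = y.1.2
    · simp [h]
    · rw [if_neg (show ¬ (y : D.P × Blx D).2 = x.1.2 from fun hh => h hh.symm), if_neg h]
  rw [h1, h2]
  have hxy : x = y ↔ (x.1.1 = y.1.1 ∧ x.1.2 = y.1.2) := by
    constructor
    · rintro rfl; exact ⟨rfl, rfl⟩
    · rintro ⟨ha, hb⟩; exact Subtype.ext (Prod.ext ha hb)
  have hadj : (D.Gamma1.adjMatrix ℝ).submatrix ((flagEquiv D).symm) ((flagEquiv D).symm) x y
      = if (x ≠ y ∧ (x.1.1 = y.1.1 ∨ x.1.2.1 = y.1.2.1)) then 1 else 0 := by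
    rw [Matrix.submatrix_apply, SimpleGraph.adjMatrix_apply]
    congr 1
    simp only [BIBD.Gamma1, flagEquiv, Equiv.coe_fn_symm_mk, ne_eq, eq_iff_iff]
    constructor
    · rintro ⟨hne, h⟩
      exact ⟨fun h' => hne (by rw [h']), h⟩
    · rintro ⟨hne, h⟩
      refine ⟨fun h' => hne ?_, h⟩
      exact (flagEquiv D).symm.injective h'
  rw [hadj]
  have hbl : (x.1.2.1 = y.1.2.1) ↔ x.1.2 = y.1.2 := Subtype.ext_iff.symm
  by_cases hxy' : x = y
  · subst hxy'
    simp [Matrix.smul_apply, Matrix.one_apply]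
    norm_num
  · have h12 : ¬(x.1.1 = y.1.1 ∧ x.1.2 = y.1.2) := fun hh => hxy' (hxy.2 hh)
    rw [Matrix.smul_apply, Matrix.one_apply_ne hxy']
    by_cases hpt : x.1.1 = y.1.1 <;> by_cases hb : x.1.2 = y.1.2
    · exact absurd ⟨hpt, hb⟩ h12
    · simp [hpt, hb, hxy', hbl]
    · simp [hpt, hb, hxy', hbl]
    · simp [hpt, hb, hxy', hbl]

private lemma BBt : Bmat D * (Bmat D)ᵀ =
    fromBlocks ((r:ℝ) • 1) (Nmat D) (Nmat D)ᵀ ((k:ℝ) • 1) := by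
  ext i j
  rw [Matrix.mul_apply]
  cases i with
  | inl p =>
    cases j with
    | inl q =>
      simp only [Bmat, of_apply, Sum.elim_inl, transpose_apply, fromBlocks_apply₁₁]
      rw [sumS D (fun y => (if y.1 = p then (1:ℝ) else 0) * (if y.1 = q then 1 else 0))]
      rw [Fintype.sum_prod_type]
      have hinner : ∀ p' : D.P,
          (∑ c : Blx D, if (p', c).1 ∈ (p', c).2.1 then
              (if (p', c).1 = p then (1:ℝ) else 0) * (if (p', c).1 = q then 1 else 0) else 0)
          = (if p' = p then (1:ℝ) else 0) * ((if p' = q then (1:ℝ) else 0) * r) := by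
        intro p'
        have e1 : ∀ c : Blx D, (if (p', c).1 ∈ (p', c).2.1 then
              (if (p', c).1 = p then (1:ℝ) else 0) * (if (p', c).1 = q then 1 else 0) else 0)
            = (if p' = p then (1:ℝ) else 0) * (if p' = q then 1 else 0) *
              (if p' ∈ c.1 then 1 else 0) := by
          intro c; by_cases h : p' ∈ c.1 <;> simp [h]
        rw [Finset.sum_congr rfl (fun c _ => e1 c), ← Finset.mul_sum, sum_Bl_ite, mul_assoc]
      rw [Finset.sum_congr rfl (fun p' _ => hinner p'), sum_dd]
      rw [Matrix.smul_apply, Matrix.one_apply]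
      by_cases h : p = q <;> simp [h]
    | inr c =>
      simp only [Bmat, of_apply, Sum.elim_inl, Sum.elim_inr, transpose_apply,
        fromBlocks_apply₁₂, Nmat]
      rw [sumS D (fun y => (if y.1 = p then (1:ℝ) else 0) * (if y.2 = c then 1 else 0))]
      rw [Fintype.sum_prod_type]
      have hinner : ∀ p' : D.P,
          (∑ c' : Blx D, if (p', c').1 ∈ (p', c').2.1 then
              (if (p', c').1 = p then (1:ℝ) else 0) * (if (p', c').2 = c then 1 else 0) else 0)
          = (if p' = p then (1:ℝ) else 0) * (if p' ∈ c.1 then (1:ℝ) else 0) := by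
        intro p'
        have e1 : ∀ c' : Blx D, (if (p', c').1 ∈ (p', c').2.1 then
              (if (p', c').1 = p then (1:ℝ) else 0) * (if (p', c').2 = c then 1 else 0) else 0)
            = ((if p' = p then (1:ℝ) else 0) * (if p' ∈ c'.1 then (1:ℝ) else 0)) *
              (if c' = c then 1 else 0) := by
          intro c'; by_cases h : p' ∈ c'.1 <;> by_cases h2 : c' = c <;> simp [h, h2]
        rw [Finset.sum_congr rfl (fun c' _ => e1 c'),
          sum_fd c (fun c' => (if p' = p then (1:ℝ) else 0) * (if p' ∈ c'.1 then (1:ℝ) else 0))]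
      rw [Finset.sum_congr rfl (fun p' _ => hinner p'), sum_dd]
  | inr c =>
    cases j with
    | inl q =>
      simp only [Bmat, of_apply, Sum.elim_inl, Sum.elim_inr, transpose_apply,
        fromBlocks_apply₂₁, Nmat]
      rw [sumS D (fun y => (if y.2 = c then (1:ℝ) else 0) * (if y.1 = q then 1 else 0))]
      rw [Fintype.sum_prod_type]
      have hinner : ∀ p' : D.P,
          (∑ c' : Blx D, if (p', c').1 ∈ (p', c').2.1 then
              (if (p', c').2 = c then (1:ℝ) else 0) * (if (p', c').1 = q then 1 else 0) else 0)
          = (if p' = q then (1:ℝ) else 0) * (if p' ∈ c.1 then (1:ℝ) else 0) := by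
        intro p'
        have e1 : ∀ c' : Blx D, (if (p', c').1 ∈ (p', c').2.1 then
              (if (p', c').2 = c then (1:ℝ) else 0) * (if (p', c').1 = q then 1 else 0) else 0)
            = ((if p' = q then (1:ℝ) else 0) * (if p' ∈ c'.1 then (1:ℝ) else 0)) *
              (if c' = c then 1 else 0) := by
          intro c'; by_cases h : p' ∈ c'.1 <;> by_cases h2 : c' = c <;> simp [h, h2] <;> ring
        rw [Finset.sum_congr rfl (fun c' _ => e1 c'),
          sum_fd c (fun c' => (if p' = q then (1:ℝ) else 0) * (if p' ∈ c'.1 then (1:ℝ) else 0))]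
      rw [Finset.sum_congr rfl (fun p' _ => hinner p')]
      have e2 : ∀ p' : D.P, (if p' = q then (1:ℝ) else 0) * (if p' ∈ c.1 then (1:ℝ) else 0)
          = (if p' = q then (1:ℝ) else 0) * (fun p'' => if p'' ∈ c.1 then (1:ℝ) else 0) p' := by
        intro p'; rfl
      rw [Finset.sum_congr rfl (fun p' _ => e2 p'), sum_dd]
    | inr d =>
      simp only [Bmat, of_apply, Sum.elim_inr, transpose_apply, fromBlocks_apply₂₂]
      rw [sumS D (fun y => (if y.2 = c then (1:ℝ) else 0) * (if y.2 = d then 1 else 0))]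
      rw [Fintype.sum_prod_type_right]
      have hinner : ∀ c' : Blx D,
          (∑ p' : D.P, if (p', c').1 ∈ (p', c').2.1 then
              (if (p', c').2 = c then (1:ℝ) else 0) * (if (p', c').2 = d then 1 else 0) else 0)
          = (if c' = c then (1:ℝ) else 0) * ((if c' = d then (1:ℝ) else 0) * k) := by
        intro c'
        have e1 : ∀ p' : D.P, (if (p', c').1 ∈ (p', c').2.1 then
              (if (p', c').2 = c then (1:ℝ) else 0) * (if (p', c').2 = d then 1 else 0) else 0)
            = (if c' = c then (1:ℝ) else 0) * (if c' = d then 1 else 0) *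
              (if p' ∈ c'.1 then 1 else 0) := by
          intro p'; by_cases h : p' ∈ c'.1 <;> simp [h]
        rw [Finset.sum_congr rfl (fun p' _ => e1 p'), ← Finset.mul_sum, sum_P_ite, mul_assoc]
      rw [Finset.sum_congr rfl (fun c' _ => hinner c'), sum_dd]
      rw [Matrix.smul_apply, Matrix.one_apply]
      by_cases h : c = d <;> simp [h]

private lemma NNt : Nmat D * (Nmat D)ᵀ
    = ((r:ℝ) - (lam:ℝ)) • 1 +
      Matrix.replicateCol Unit (fun _ => (lam:ℝ)) * Matrix.replicateRow Unit (fun _ => (1:ℝ)) := by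
  ext p q
  rw [Matrix.mul_apply]
  have hcr : (Matrix.replicateCol Unit (fun _ => (lam:ℝ)) * Matrix.replicateRow Unit (fun _ => (1:ℝ))) p q
      = (lam:ℝ) := by
    rw [Matrix.mul_apply]
    simp
  simp only [Nmat, of_apply, transpose_apply]
  by_cases h : p = q
  · subst h
    have e1 : ∀ c : Blx D, (if p ∈ c.1 then (1:ℝ) else 0) * (if p ∈ c.1 then 1 else 0)
        = if p ∈ c.1 then (1:ℝ) else 0 := by intro c; by_cases hc : p ∈ c.1 <;> simp [hc]
    rw [Finset.sum_congr rfl (fun c _ => e1 c), sum_Bl_ite]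
    rw [Matrix.add_apply, hcr, Matrix.smul_apply, Matrix.one_apply_eq, smul_eq_mul]
    ring
  · rw [sum_Bl_pair D p q h, Matrix.add_apply, hcr, Matrix.smul_apply,
      Matrix.one_apply_ne h, smul_eq_mul]
    ring


private lemma det_swap_aux {K : Type*} [Field K] {m n : Type*} [Fintype m] [Fintype n]
    [DecidableEq m] [DecidableEq n] (z : K) (hz : z ≠ 0) (A : Matrix m n K) (B : Matrix n m K) :
    z ^ Fintype.card m * ((z • (1 : Matrix n n K) - B * A).det)
      = z ^ Fintype.card n * ((z • (1 : Matrix m m K) - A * B).det) := by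
  have e1 : z • (1 : Matrix n n K) - B * A = z • ((1 : Matrix n n K) - z⁻¹ • (B * A)) := by
    rw [smul_sub, smul_smul, mul_inv_cancel₀ hz, one_smul]
  have e2 : z • (1 : Matrix m m K) - A * B = z • ((1 : Matrix m m K) - z⁻¹ • (A * B)) := by
    rw [smul_sub, smul_smul, mul_inv_cancel₀ hz, one_smul]
  have e3 : ((1 : Matrix n n K) - z⁻¹ • (B * A)).det = ((1 : Matrix m m K) - z⁻¹ • (A * B)).det := by
    have h1 : z⁻¹ • (B * A) = (z⁻¹ • B) * A := by rw [Matrix.smul_mul]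
    have h2 : z⁻¹ • (A * B) = A * (z⁻¹ • B) := by rw [Matrix.mul_smul]
    rw [h1, h2, Matrix.det_one_sub_mul_comm]
  rw [e1, e2, Matrix.det_smul, Matrix.det_smul, e3]
  ring

private lemma charpoly_to_ratfunc {n : Type*} [Fintype n] [DecidableEq n] (M : Matrix n n ℝ) :
    algebraMap ℝ[X] (RatFunc ℝ) M.charpoly
      = ((algebraMap ℝ[X] (RatFunc ℝ) Polynomial.X) • (1 : Matrix n n (RatFunc ℝ))
          - M.map (fun a => algebraMap ℝ[X] (RatFunc ℝ) (Polynomial.C a))).det := by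
  rw [Matrix.charpoly, RingHom.map_det]
  congr 1
  ext i j
  by_cases h : i = j
  · subst h
    simp [Matrix.charmatrix_apply_eq, Matrix.map_apply, Matrix.one_apply_eq]
  · simp [Matrix.charmatrix_apply_ne _ _ _ h, Matrix.map_apply, Matrix.one_apply_ne h, h]


private lemma smul_one_map {n : Type*} [Fintype n] [DecidableEq n] (a : ℝ) :
    ((a • (1 : Matrix n n ℝ)).map (fun x => algebraMap ℝ[X] (RatFunc ℝ) (Polynomial.C x)))
      = (algebraMap ℝ[X] (RatFunc ℝ) (Polynomial.C a)) • (1 : Matrix n n (RatFunc ℝ)) := by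
  ext i j
  by_cases h : i = j
  · subst h
    simp [Matrix.map_apply, Matrix.one_apply_eq]
  · simp [Matrix.map_apply, Matrix.one_apply_ne h]

private lemma col_row_map (u w : D.P → ℝ) :
    ((Matrix.replicateCol Unit u * Matrix.replicateRow Unit w).map
        (fun x => algebraMap ℝ[X] (RatFunc ℝ) (Polynomial.C x)))
      = Matrix.replicateCol Unit (fun p => algebraMap ℝ[X] (RatFunc ℝ) (Polynomial.C (u p)))
          * Matrix.replicateRow Unit (fun p => algebraMap ℝ[X] (RatFunc ℝ) (Polynomial.C (w p))) := by
  ext i j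
  simp [Matrix.map_apply, Matrix.mul_apply]

end AuxFlag

set_option synthInstance.maxHeartbeats 1000000 in
set_option maxHeartbeats 3000000 in
open Matrix Polynomial in
/-- The characteristic polynomial of the adjacency matrix of the flag-graph `Γ₁(D)` of a
non-trivial `(v,b,r,k,λ)`-BIBD with `v ≤ b`. -/
theorem flagGraph_adjMatrix_charpoly (D : BIBD v b r k lam) (hnt : 1 < v - k)
    (hvb : v ≤ b) :
    (D.Gamma1.adjMatrix ℝ).charpoly =
      (Polynomial.X - Polynomial.C ((r : ℝ) + (k : ℝ) - 2)) *
      (Polynomial.X - Polynomial.C ((k : ℝ) - 2)) ^ (b - v) *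
      (Polynomial.X + Polynomial.C 2) ^ (b * k - b - v + 1) *
      (Polynomial.X ^ 2 - Polynomial.C ((r : ℝ) + (k : ℝ) - 4) * Polynomial.X +
        Polynomial.C (((r : ℝ) - 2) * ((k : ℝ) - 2) - ((r : ℝ) - (lam : ℝ)))) ^ (v - 1) := by
  classical
  have hk2 : 2 ≤ k := D.one_lt_k
  have hkv : k < v := D.k_lt_v
  have hv1 : 1 ≤ v := le_trans (by omega) hkv.le
  have hsum : v + b ≤ b * k := by
    have h1 : b ≤ b * (k - 1) := Nat.le_mul_of_pos_right b (by omega)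
    have h2 : b * (k - 1) + b = b * k := by
      rw [← Nat.mul_succ]; congr 1; omega
    have h3 : v ≤ b * (k - 1) := le_trans hvb h1
    omega
  set K := RatFunc ℝ with hK
  set Φ : ℝ[X] →+* K := (algebraMap ℝ[X] (RatFunc ℝ)) with hΦ
  have hinj : Function.Injective Φ := RatFunc.algebraMap_injective ℝ
  apply hinj
  set ψf : ℝ → K := fun a => Φ (Polynomial.C a) with hψf
  set z : K := Φ (X + C 2) with hz_def
  set rK : K := Φ (C ((r:ℕ) : ℝ)) with hrK
  set kK : K := Φ (C ((k:ℕ) : ℝ)) with hkK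
  set lK : K := Φ (C ((lam:ℕ) : ℝ)) with hlK
  set u0 : K := Φ (X ^ 2 - C ((r : ℝ) + (k : ℝ) - 4) * X +
      C (((r : ℝ) - 2) * ((k : ℝ) - 2) - ((r : ℝ) - (lam : ℝ)))) with hu0
  -- nonvanishing
  have hzne : z ≠ 0 := by
    rw [hz_def]
    intro h
    exact (Polynomial.monic_X_add_C (2:ℝ)).ne_zero (hinj (by simpa using h))
  have hzkne : z - kK ≠ 0 := by
    rw [hz_def, hkK, ← _root_.map_sub]
    intro h
    have h2 : (X + C 2 - C ((k:ℕ):ℝ)) = X + C (2 - ((k:ℕ):ℝ)) := by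
      rw [_root_.map_sub]; ring
    rw [h2] at h
    exact (Polynomial.monic_X_add_C ((2:ℝ) - ((k:ℕ):ℝ))).ne_zero (hinj (by simpa using h))
  have hu0ne : u0 ≠ 0 := by
    rw [hu0]
    intro h
    have hmon : (X ^ 2 - C ((r : ℝ) + (k : ℝ) - 4) * X +
        C (((r : ℝ) - 2) * ((k : ℝ) - 2) - ((r : ℝ) - (lam : ℝ)))).Monic := by
      have hrw : (X ^ 2 - C ((r : ℝ) + (k : ℝ) - 4) * X +
          C (((r : ℝ) - 2) * ((k : ℝ) - 2) - ((r : ℝ) - (lam : ℝ))))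
        = X ^ (1 + 1) + (C (-((r : ℝ) + (k : ℝ) - 4)) * X
            + C (((r : ℝ) - 2) * ((k : ℝ) - 2) - ((r : ℝ) - (lam : ℝ)))) := by
        rw [_root_.map_neg]; ring
      rw [hrw]
      exact Polynomial.monic_X_pow_add
        (lt_of_le_of_lt Polynomial.degree_linear_le (by norm_num))
    exact hmon.ne_zero (hinj (by simpa using h))
  -- matrices over K
  set BK : Matrix (D.P ⊕ Blx D) (Sfx D) K := (Bmat D).map ψf with hBK
  set NK : Matrix D.P (Blx D) K := (Nmat D).map ψf with hNK
  set ψR : ℝ →+* K := Φ.comp (Polynomial.C : ℝ →+* ℝ[X]) with hψR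
  have hψRf : ⇑ψR = ψf := rfl
  -- cardinalities
  have hcardP : Fintype.card D.P = v := D.card_points
  have hcardB : Fintype.card (Blx D) = b := by rw [Fintype.card_coe, D.card_blocks]
  have hcardPB : Fintype.card (D.P ⊕ Blx D) = v + b := by
    rw [Fintype.card_sum, hcardP, hcardB]
  have hcardS : Fintype.card (Sfx D) = b * k := card_Sf D
  -- step 1
  have hre : ((D.Gamma1.adjMatrix ℝ).submatrix (flagEquiv D).symm (flagEquiv D).symm).charpoly
      = (D.Gamma1.adjMatrix ℝ).charpoly := by
    rw [← Matrix.charpoly_reindex (flagEquiv D) (D.Gamma1.adjMatrix ℝ), Matrix.reindex_apply]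
  have step1 : Φ ((D.Gamma1.adjMatrix ℝ).charpoly)
      = ((Φ X) • (1 : Matrix (Sfx D) (Sfx D) K)
          - ((D.Gamma1.adjMatrix ℝ).submatrix (flagEquiv D).symm (flagEquiv D).symm).map ψf).det := by
    rw [← hre]
    exact charpoly_to_ratfunc _
  -- step 2
  have hA : (D.Gamma1.adjMatrix ℝ).submatrix (flagEquiv D).symm (flagEquiv D).symm
      = (Bmat D)ᵀ * Bmat D - (2:ℝ) • 1 := by
    rw [BtB D]; exact (add_sub_cancel_right _ _).symm
  have hm1 : (((Bmat D)ᵀ * Bmat D).map ψf) = BKᵀ * BK := by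
    rw [← hψRf, Matrix.map_mul (f := ψR), Matrix.transpose_map]
    rfl
  have hm2 : (((2:ℝ) • (1 : Matrix (Sfx D) (Sfx D) ℝ)).map ψf) = (Φ (C 2)) • 1 :=
    smul_one_map (2:ℝ)
  have step2 : (Φ X) • (1 : Matrix (Sfx D) (Sfx D) K)
        - ((D.Gamma1.adjMatrix ℝ).submatrix (flagEquiv D).symm (flagEquiv D).symm).map ψf
      = z • 1 - BKᵀ * BK := by
    have hmap : ((D.Gamma1.adjMatrix ℝ).submatrix (flagEquiv D).symm (flagEquiv D).symm).map ψf
        = BKᵀ * BK - (Φ (C 2)) • 1 := by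
      rw [hA, ← hm1, ← hm2]
      ext i j
      simp only [Matrix.map_apply, Matrix.sub_apply]
      show Φ (C (((Bmat D)ᵀ * Bmat D) i j - (((2:ℝ) • 1 : Matrix (Sfx D) (Sfx D) ℝ)) i j)) = _
      simp only [_root_.map_sub]
      rfl
    rw [hmap]
    have hzadd : z = Φ X + Φ (C 2) := by rw [hz_def, _root_.map_add]
    rw [hzadd, add_smul]
    abel
  -- step 3 : swap
  have step3 : z ^ (v + b) * (z • (1 : Matrix (Sfx D) (Sfx D) K) - BKᵀ * BK).det
      = z ^ (b * k) * (z • (1 : Matrix (D.P ⊕ Blx D) (D.P ⊕ Blx D) K) - BK * BKᵀ).det := by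
    have := det_swap_aux z hzne BK BKᵀ
    rwa [hcardPB, hcardS] at this
  -- step 4 : block form
  have hBBtK : BK * BKᵀ = fromBlocks (rK • 1) NK NKᵀ (kK • 1) := by
    rw [hBK, ← hψRf, ← Matrix.transpose_map, ← Matrix.map_mul (f := ψR), BBt D,
      Matrix.fromBlocks_map, hψRf]
    rw [show (((r:ℝ)) • (1 : Matrix D.P D.P ℝ)).map ψf = rK • 1 from smul_one_map _]
    rw [show (((k:ℝ)) • (1 : Matrix (Blx D) (Blx D) ℝ)).map ψf = kK • 1 from smul_one_map _]
    rw [show ((Nmat D)ᵀ).map ψf = NKᵀ from by rw [← hψRf, Matrix.transpose_map]; rfl]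
  have step4 : z • (1 : Matrix (D.P ⊕ Blx D) (D.P ⊕ Blx D) K) - BK * BKᵀ
      = fromBlocks ((z - rK) • 1) (-NK) (-NKᵀ) ((z - kK) • 1) := by
    rw [hBBtK, ← Matrix.fromBlocks_one, Matrix.fromBlocks_smul, sub_eq_add_neg,
      Matrix.fromBlocks_neg, Matrix.fromBlocks_add]
    rw [smul_zero, smul_zero, zero_add, zero_add, ← sub_eq_add_neg, ← sub_eq_add_neg,
      ← sub_smul, ← sub_smul]
  -- step 5 : Schur
  letI : Invertible ((z - kK) • (1 : Matrix (Blx D) (Blx D) K)) :=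
    ⟨(z - kK)⁻¹ • 1,
      by rw [Matrix.smul_mul, Matrix.one_mul, smul_smul, inv_mul_cancel₀ hzkne, one_smul],
      by rw [Matrix.smul_mul, Matrix.one_mul, smul_smul, mul_inv_cancel₀ hzkne, one_smul]⟩
  have hinvof : ⅟((z - kK) • (1 : Matrix (Blx D) (Blx D) K)) = (z - kK)⁻¹ • 1 := rfl
  have step5 : (fromBlocks ((z - rK) • (1 : Matrix D.P D.P K)) (-NK) (-NKᵀ)
        ((z - kK) • (1 : Matrix (Blx D) (Blx D) K))).det
      = (z - kK) ^ b * ((z - rK) • (1 : Matrix D.P D.P K) - (z - kK)⁻¹ • (NK * NKᵀ)).det := by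
    rw [Matrix.det_fromBlocks₂₂, hinvof]
    congr 2
    · rw [Matrix.det_smul, Matrix.det_one, hcardB, mul_one]
    · rw [Matrix.mul_smul, Matrix.mul_one, Matrix.smul_mul, Matrix.neg_mul, Matrix.mul_neg,
        neg_neg]
  -- step 6
  have step6 : (z - kK) ^ v *
        ((z - rK) • (1 : Matrix D.P D.P K) - (z - kK)⁻¹ • (NK * NKᵀ)).det
      = (((z - kK) * (z - rK)) • (1 : Matrix D.P D.P K) - NK * NKᵀ).det := by
    have e : (z - kK) • ((z - rK) • (1 : Matrix D.P D.P K) - (z - kK)⁻¹ • (NK * NKᵀ))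
        = ((z - kK) * (z - rK)) • (1 : Matrix D.P D.P K) - NK * NKᵀ := by
      rw [smul_sub, smul_smul, smul_smul, mul_inv_cancel₀ hzkne, one_smul]
    rw [← e, Matrix.det_smul, hcardP]
  -- step 7
  have hNNtK : NK * NKᵀ = (rK - lK) • 1 +
      Matrix.replicateCol Unit (fun _ : D.P => lK) * Matrix.replicateRow Unit (fun _ : D.P => (1:K)) := by
    rw [hNK, ← hψRf, ← Matrix.transpose_map, ← Matrix.map_mul (f := ψR), NNt D]
    have hsplit : ∀ (A B : Matrix D.P D.P ℝ), (A + B).map ψR = A.map ψR + B.map ψR := by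
      intro A B; ext i j
      simp only [Matrix.map_apply, Matrix.add_apply, _root_.map_add]
    rw [hsplit, hψRf]
    rw [show (((r:ℝ) - (lam:ℝ)) • (1 : Matrix D.P D.P ℝ)).map ψf
      = (Φ (C ((r:ℝ) - (lam:ℝ)))) • 1 from smul_one_map _]
    rw [show ((Matrix.replicateCol Unit (fun _ : D.P => (lam:ℝ)) *
        Matrix.replicateRow Unit (fun _ : D.P => (1:ℝ))).map ψf)
      = Matrix.replicateCol Unit (fun p : D.P => Φ (C ((lam:ℝ))))
          * Matrix.replicateRow Unit (fun p : D.P => Φ (C ((1:ℝ)))) from col_row_map D _ _]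
    congr 1
    · congr 1
      rw [_root_.map_sub, _root_.map_sub]
    · congr 1
      ext i j
      rw [Matrix.replicateRow_apply, Matrix.replicateRow_apply]
      simp
  have hu0w : u0 = (z - kK) * (z - rK) - (rK - lK) := by
    rw [hu0, hz_def, hrK, hkK, hlK]
    simp only [_root_.map_sub, _root_.map_add, _root_.map_mul, _root_.map_pow,
      _root_.map_ofNat, map_X]
    ring
  have step7 : ((z - kK) * (z - rK)) • (1 : Matrix D.P D.P K) - NK * NKᵀ
      = u0 • 1 - Matrix.replicateCol Unit (fun _ : D.P => lK) * Matrix.replicateRow Unit (fun _ : D.P => (1:K)) := by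
    rw [hNNtK, hu0w, sub_add_eq_sub_sub,
      show ((z - kK) * (z - rK) - (rK - lK)) • (1 : Matrix D.P D.P K)
        = ((z - kK) * (z - rK)) • 1 - (rK - lK) • 1 from sub_smul _ _ _]
  -- step 8
  have step8 : (u0 • (1 : Matrix D.P D.P K)
        - Matrix.replicateCol Unit (fun _ : D.P => lK) * Matrix.replicateRow Unit (fun _ : D.P => (1:K))).det
      = u0 ^ (v - 1) * (u0 - (v : K) * lK) := by
    have e : u0 • (1 : Matrix D.P D.P K)
          - Matrix.replicateCol Unit (fun _ : D.P => lK) * Matrix.replicateRow Unit (fun _ : D.P => (1:K))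
        = u0 • ((1 : Matrix D.P D.P K) +
            Matrix.replicateCol Unit (fun _ : D.P => -(u0⁻¹ * lK)) *
              Matrix.replicateRow Unit (fun _ : D.P => (1:K))) := by
      rw [smul_add, sub_eq_add_neg]
      congr 1
      ext i j
      rw [Matrix.neg_apply, Matrix.smul_apply, Matrix.mul_apply, Matrix.mul_apply]
      simp only [Matrix.replicateCol_apply, Matrix.replicateRow_apply, Finset.univ_unique,
        Finset.sum_singleton, smul_eq_mul]
      linear_combination lK * mul_inv_cancel₀ hu0ne
    rw [e, Matrix.det_smul, Matrix.det_one_add_replicateCol_mul_replicateRow, hcardP]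
    have hdot : (fun _ : D.P => (1:K)) ⬝ᵥ (fun _ : D.P => -(u0⁻¹ * lK))
        = -((v:K) * (u0⁻¹ * lK)) := by
      simp only [dotProduct, one_mul, Finset.sum_const, Finset.card_univ, hcardP,
        nsmul_eq_mul]
      ring
    rw [hdot]
    have hv' : v = (v - 1) + 1 := by omega
    rw [show u0 ^ v = u0 ^ (v - 1) * u0 from by conv_lhs => rw [hv', pow_succ]]
    rw [mul_assoc]
    congr 1
    linear_combination -((v:K) * lK) * mul_inv_cancel₀ hu0ne
  -- step 9
  have hcast : ∀ n : ℕ, Φ (C ((n:ℕ):ℝ)) = (n : K) := fun n => by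
    rw [map_natCast (Polynomial.C : ℝ →+* ℝ[X]), map_natCast]
  have hNat : lam * (v - 1) = r * (k - 1) := by
    have h := identR D
    have h1 : ((lam * (v - 1) : ℕ) : ℝ) = ((r * (k - 1) : ℕ) : ℝ) := by
      push_cast [Nat.cast_sub hv1, Nat.cast_sub (le_of_lt D.one_lt_k)]
      linarith [h]
    exact_mod_cast h1
  have hidK : (lam : K) * ((v : K) - 1) = (r : K) * ((k : K) - 1) := by
    have h1 : ((lam * (v - 1) : ℕ) : K) = ((r * (k - 1) : ℕ) : K) := by
      exact_mod_cast congrArg (fun n : ℕ => (n : K)) hNat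
    rw [Nat.cast_mul, Nat.cast_mul, Nat.cast_sub hv1, Nat.cast_sub (le_of_lt D.one_lt_k),
      Nat.cast_one] at h1
    exact h1
  have hid : lK * ((v : K) - 1) = rK * (kK - 1) := by
    rw [hlK, hrK, hkK, hcast lam, hcast r, hcast k]
    exact hidK
  have step9 : u0 - (v : K) * lK = (z - rK - kK) * z := by
    rw [hu0w]
    linear_combination -hid
  -- RHS of the goal through Φ
  have e1 : Φ (X - C ((r : ℝ) + (k : ℝ) - 2)) = z - rK - kK := by
    rw [hz_def, hrK, hkK]
    simp only [_root_.map_sub, _root_.map_add, _root_.map_ofNat, map_X]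
    ring
  have e2 : Φ (X - C ((k : ℝ) - 2)) = z - kK := by
    rw [hz_def, hkK]
    simp only [_root_.map_sub, _root_.map_add, _root_.map_ofNat, map_X]
    ring
  have hRHS : Φ ((X - C ((r : ℝ) + (k : ℝ) - 2)) *
        (X - C ((k : ℝ) - 2)) ^ (b - v) *
        (X + C 2) ^ (b * k - b - v + 1) *
        (X ^ 2 - C ((r : ℝ) + (k : ℝ) - 4) * X +
          C (((r : ℝ) - 2) * ((k : ℝ) - 2) - ((r : ℝ) - (lam : ℝ)))) ^ (v - 1))
      = (z - rK - kK) * (z - kK) ^ (b - v) * z ^ (b * k - b - v + 1) * u0 ^ (v - 1) := by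
    rw [_root_.map_mul, _root_.map_mul, _root_.map_mul, _root_.map_pow, _root_.map_pow,
      _root_.map_pow, e1, e2, ← hz_def, ← hu0]
  -- final assembly
  have hcanne : z ^ (v + b) * (z - kK) ^ v ≠ 0 :=
    mul_ne_zero (pow_ne_zero _ hzne) (pow_ne_zero _ hzkne)
  apply mul_left_cancel₀ hcanne
  rw [hRHS]
  calc z ^ (v + b) * (z - kK) ^ v * Φ ((D.Gamma1.adjMatrix ℝ).charpoly)
      = (z - kK) ^ v * (z ^ (v + b) *
          (z • (1 : Matrix (Sfx D) (Sfx D) K) - BKᵀ * BK).det) := by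
        rw [step1, step2]; ring
    _ = (z - kK) ^ v * (z ^ (b * k) *
          (z • (1 : Matrix (D.P ⊕ Blx D) (D.P ⊕ Blx D) K) - BK * BKᵀ).det) := by rw [step3]
    _ = z ^ (b * k) * (z - kK) ^ b * ((z - kK) ^ v *
          ((z - rK) • (1 : Matrix D.P D.P K) - (z - kK)⁻¹ • (NK * NKᵀ)).det) := by
        rw [step4, step5]; ring
    _ = z ^ (b * k) * (z - kK) ^ b * (u0 ^ (v - 1) * (u0 - (v : K) * lK)) := by
        rw [step6, step7, step8]
    _ = z ^ (b * k) * (z - kK) ^ b * (u0 ^ (v - 1) * ((z - rK - kK) * z)) := by rw [step9]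
    _ = z ^ (v + b) * (z - kK) ^ v *
          ((z - rK - kK) * (z - kK) ^ (b - v) * z ^ (b * k - b - v + 1) * u0 ^ (v - 1)) := by
        have hp1 : z ^ (v + b) * z ^ (b * k - b - v + 1) = z ^ (b * k + 1) := by
          rw [← pow_add]; congr 1; omega
        have hp2 : (z - kK) ^ v * (z - kK) ^ (b - v) = (z - kK) ^ b := by
          rw [← pow_add]; congr 1; omega
        have hp3 : z ^ (b * k + 1) = z ^ (b * k) * z := by rw [pow_succ]
        calc z ^ (b * k) * (z - kK) ^ b * (u0 ^ (v - 1) * ((z - rK - kK) * z))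
            = (z ^ (b * k) * z) * (z - kK) ^ b * (u0 ^ (v - 1) * (z - rK - kK)) := by ring
          _ = (z ^ (v + b) * z ^ (b * k - b - v + 1)) * ((z - kK) ^ v * (z - kK) ^ (b - v)) *
                (u0 ^ (v - 1) * (z - rK - kK)) := by rw [← hp3, ← hp1, ← hp2]
          _ = z ^ (v + b) * (z - kK) ^ v *
                ((z - rK - kK) * (z - kK) ^ (b - v) * z ^ (b * k - b - v + 1) * u0 ^ (v - 1)) := by
              ring
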